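/- Let I ⊆ ℝ be an interval, T ∈ (0,∞], and let f, g: [0,T) → I be locally absolutely continuous with f(0) = g(0). Suppose h: I × [0,T) → ℝ satisfies: (i) h(x,·) is measurable for each x ∈ I; (ii) there is a locally integrable p: [0,T) → [0,∞) such that |h(x,t) − h(y,t)| ≤ p(t)|x−y| for all t ∈ [0,T) and x, y ∈ I; (iii) g'(t) = h(g(t),t) and f'(t) ≤ h(f(t),t) for a.e. t ∈ [0,T). Then f(t) ≤ g(t) for all t ∈ [0,T). -/
import Mathlib


open Set Real MeasureTheory Filter intervalIntegral
open scoped ENNReal Topology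

/-- Comparison lemma for Carathéodory ODEs: if `g` solves `g' = h(g,·)`, `f` is a
subsolution with the same initial value, and `h` is Lipschitz in the space variable
with a locally integrable Lipschitz constant `p`, then `f ≤ g` on `[0,T)`.
Here local absolute continuity of `f, g` is expressed through the fundamental
theorem of calculus with locally integrable a.e. derivatives `f', g'`. -/
theorem comparison_lemma (T : ℝ≥0∞) (hT : 0 < T) (I : Set ℝ) (hI : OrdConnected I)
    (D : Set ℝ) (hD : D = {t : ℝ | 0 ≤ t ∧ (ENNReal.ofReal t) < T})
    (f g f' g' : ℝ → ℝ)
    (hfI : ∀ t ∈ D, f t ∈ I) (hgI : ∀ t ∈ D, g t ∈ I)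
    (hf0 : f 0 = g 0)
    (hfint : ∀ t ∈ D, IntervalIntegrable f' volume 0 t)
    (hgint : ∀ t ∈ D, IntervalIntegrable g' volume 0 t)
    (hfFTC : ∀ t ∈ D, f t = f 0 + ∫ s in (0:ℝ)..t, f' s)
    (hgFTC : ∀ t ∈ D, g t = g 0 + ∫ s in (0:ℝ)..t, g' s)
    (h : ℝ → ℝ → ℝ)
    (hmeas : ∀ x ∈ I, Measurable (fun t => h x t))
    (p : ℝ → ℝ) (hp : ∀ t ∈ D, 0 ≤ p t)
    (hpint : ∀ t ∈ D, IntervalIntegrable p volume 0 t)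
    (hLip : ∀ t ∈ D, ∀ x ∈ I, ∀ y ∈ I, |h x t - h y t| ≤ p t * |x - y|)
    (hae : ∀ᵐ t ∂(volume.restrict D), g' t = h (g t) t ∧ f' t ≤ h (f t) t) :
    ∀ t ∈ D, f t ≤ g t := by
  intro t₀ ht₀D
  by_contra hcon
  push_neg at hcon
  have ht₀mem := ht₀D
  rw [hD] at ht₀mem
  obtain ⟨ht₀0, ht₀T⟩ := ht₀mem
  have hsubD : Icc (0:ℝ) t₀ ⊆ D := by
    rw [hD]
    rintro t ⟨h1, h2⟩
    exact ⟨h1, lt_of_le_of_lt (ENNReal.ofReal_le_ofReal h2) ht₀T⟩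
  have hI0 : Icc (0:ℝ) t₀ = uIcc 0 t₀ := (uIcc_of_le ht₀0).symm
  -- continuity of f and g on `[0, t₀]`
  have hfc : ContinuousOn f (Icc 0 t₀) := by
    have hc : ContinuousOn (fun t => f 0 + ∫ s in (0:ℝ)..t, f' s) (Icc 0 t₀) := by
      apply continuousOn_const.add
      rw [hI0]
      exact continuousOn_primitive_interval' (hfint t₀ ht₀D) left_mem_uIcc
    exact hc.congr fun t ht => hfFTC t (hsubD ht)
  have hgc : ContinuousOn g (Icc 0 t₀) := by
    have hc : ContinuousOn (fun t => g 0 + ∫ s in (0:ℝ)..t, g' s) (Icc 0 t₀) := by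
      apply continuousOn_const.add
      rw [hI0]
      exact continuousOn_primitive_interval' (hgint t₀ ht₀D) left_mem_uIcc
    exact hc.congr fun t ht => hgFTC t (hsubD ht)
  have huc : ContinuousOn (fun t => f t - g t) (Icc 0 t₀) := hfc.sub hgc
  -- the set where `f ≤ g`
  set S : Set ℝ := Icc 0 t₀ ∩ {t | f t - g t ≤ 0} with hS
  have hSclosed : IsClosed S :=
    huc.preimage_isClosed_of_isClosed isClosed_Icc isClosed_Iic
  have hScomp : IsCompact S := isCompact_Icc.of_isClosed_subset hSclosed inter_subset_left
  have hSne : S.Nonempty := ⟨0, ⟨le_rfl, ht₀0⟩, by simp [hf0]⟩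
  set s := sSup S with hs
  have hsS : s ∈ S := hScomp.sSup_mem hSne
  have hs0 : 0 ≤ s := hsS.1.1
  have hst₀ : s ≤ t₀ := hsS.1.2
  have hus : f s - g s ≤ 0 := hsS.2
  have hslt : s < t₀ := hst₀.lt_of_ne (fun he => by rw [he] at hus; linarith)
  -- positivity of `f - g` right of `s`
  have hpos : ∀ t ∈ Ioc s t₀, 0 < f t - g t := by
    intro t ht
    by_contra hle
    push_neg at hle
    have : t ∈ S := ⟨⟨hs0.trans ht.1.le, ht.2⟩, hle⟩
    exact absurd (le_csSup hScomp.bddAbove this) (not_le.mpr ht.1)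
  -- integrability on subintervals
  have hsubint : ∀ {q : ℝ → ℝ}, IntervalIntegrable q volume 0 t₀ →
      ∀ a ∈ Icc (0:ℝ) t₀, ∀ b ∈ Icc (0:ℝ) t₀, IntervalIntegrable q volume a b := by
    intro q hq a ha b hb
    refine hq.mono_set (uIcc_subset_uIcc ?_ ?_) <;> rw [← hI0] <;> assumption
  have hpint' : IntervalIntegrable p volume s t₀ :=
    hsubint (hpint t₀ ht₀D) s ⟨hs0, hst₀⟩ t₀ ⟨ht₀0, le_rfl⟩
  -- choose t₁ ∈ (s, t₀] with small integral of p
  have hPc : ContinuousOn (fun t => ∫ τ in s..t, p τ) (Icc s t₀) := by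
    have := continuousOn_primitive_interval' hpint' left_mem_uIcc
    rwa [uIcc_of_le hst₀] at this
  have hcw : ContinuousWithinAt (fun t => ∫ τ in s..t, p τ) (Icc s t₀) s :=
    hPc s ⟨le_rfl, hst₀⟩
  have hcw0 : Tendsto (fun t => ∫ τ in s..t, p τ) (𝓝[Icc s t₀] s) (𝓝 0) := by
    simpa [intervalIntegral.integral_same] using hcw.tendsto
  have hev : ∀ᶠ t in 𝓝[Icc s t₀] s, (∫ τ in s..t, p τ) < 1/2 :=
    hcw0.eventually_lt_const (by norm_num : (0:ℝ) < 1/2)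
  have hev' : ∀ᶠ t in 𝓝[Ioc s t₀] s, (∫ τ in s..t, p τ) < 1/2 :=
    hev.filter_mono (nhdsWithin_mono _ Ioc_subset_Icc_self)
  have : NeBot (𝓝[Ioc s t₀] s) := left_nhdsWithin_Ioc_neBot hslt
  obtain ⟨t₁, ht₁P, hst₁, ht₁t₀⟩ := (hev'.and eventually_mem_nhdsWithin).exists
  -- maximum of u on [s, t₁]
  have hsub01 : Icc s t₁ ⊆ Icc 0 t₀ := Icc_subset_Icc hs0 ht₁t₀
  obtain ⟨τ, hτmem, hτmax⟩ := isCompact_Icc.exists_isMaxOn (nonempty_Icc.mpr hst₁.le)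
    (huc.mono hsub01)
  have hτD : Icc s τ ⊆ D := fun x hx =>
    hsubD (hsub01 ⟨hx.1, hx.2.trans hτmem.2⟩)
  have hsτ : s ≤ τ := hτmem.1
  have hMpos : 0 < f τ - g τ := lt_of_lt_of_le (hpos t₁ ⟨hst₁, ht₁t₀⟩) (hτmax ⟨hst₁.le, le_rfl⟩)
  -- FTC on [s, τ]
  have hfint0 : ∀ a ∈ Icc (0:ℝ) t₀, IntervalIntegrable f' volume 0 a := fun a ha =>
    hfint a (hsubD ha)
  have hgint0 : ∀ a ∈ Icc (0:ℝ) t₀, IntervalIntegrable g' volume 0 a := fun a ha =>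
    hgint a (hsubD ha)
  have hτ01 : τ ∈ Icc (0:ℝ) t₀ := hsub01 hτmem
  have hs01 : s ∈ Icc (0:ℝ) t₀ := ⟨hs0, hst₀⟩
  have hfτ : f τ - f s = ∫ x in s..τ, f' x := by
    rw [hfFTC τ (hsubD hτ01), hfFTC s (hsubD hs01)]
    rw [show f 0 + (∫ x in (0:ℝ)..τ, f' x) - (f 0 + ∫ x in (0:ℝ)..s, f' x)
      = (∫ x in (0:ℝ)..τ, f' x) - ∫ x in (0:ℝ)..s, f' x by ring]
    exact integral_interval_sub_left (hfint0 τ hτ01) (hfint0 s hs01)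
  have hgτ : g τ - g s = ∫ x in s..τ, g' x := by
    rw [hgFTC τ (hsubD hτ01), hgFTC s (hsubD hs01)]
    rw [show g 0 + (∫ x in (0:ℝ)..τ, g' x) - (g 0 + ∫ x in (0:ℝ)..s, g' x)
      = (∫ x in (0:ℝ)..τ, g' x) - ∫ x in (0:ℝ)..s, g' x by ring]
    exact integral_interval_sub_left (hgint0 τ hτ01) (hgint0 s hs01)
  have hfsτ : IntervalIntegrable f' volume s τ := hsubint (hfint t₀ ht₀D) s hs01 τ hτ01
  have hgsτ : IntervalIntegrable g' volume s τ := hsubint (hgint t₀ ht₀D) s hs01 τ hτ01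
  have hpsτ : IntervalIntegrable p volume s τ := hsubint (hpint t₀ ht₀D) s hs01 τ hτ01
  have hpu_int : IntervalIntegrable (fun x => p x * (f x - g x)) volume s τ := by
    apply hpsτ.mul_continuousOn
    rw [uIcc_of_le hsτ]
    exact huc.mono (fun x hx => hsub01 ⟨hx.1, hx.2.trans hτmem.2⟩)
  -- a.e. pointwise inequality on [s, τ]
  have haeIcc : ∀ᵐ x ∂(volume.restrict (Icc s τ)),
      f' x - g' x ≤ p x * (f x - g x) := by
    have h1 : ∀ᵐ x ∂(volume.restrict (Icc s τ)),
        g' x = h (g x) x ∧ f' x ≤ h (f x) x :=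
      ae_restrict_of_ae_restrict_of_subset hτD hae
    have h2 : ∀ᵐ x ∂(volume.restrict (Icc s τ)), x ∈ Icc s τ :=
      ae_restrict_mem measurableSet_Icc
    have h3 : ∀ᵐ x ∂(volume.restrict (Icc s τ)), x ≠ s := by
      apply ae_restrict_of_ae
      rw [ae_iff]
      simpa [Set.setOf_eq_eq_singleton] using measure_singleton s
    filter_upwards [h1, h2, h3] with x hx hxmem hxne
    have hxD : x ∈ D := hτD hxmem
    have hxIoc : x ∈ Ioc s t₀ :=
      ⟨lt_of_le_of_ne hxmem.1 (Ne.symm hxne), hxmem.2.trans hτ01.2⟩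
    have hxpos : 0 < f x - g x := hpos x hxIoc
    calc f' x - g' x ≤ h (f x) x - h (g x) x := by
          rw [hx.1]; linarith [hx.2]
      _ ≤ |h (f x) x - h (g x) x| := le_abs_self _
      _ ≤ p x * |f x - g x| := hLip x hxD (f x) (hfI x hxD) (g x) (hgI x hxD)
      _ = p x * (f x - g x) := by rw [abs_of_pos hxpos]
  -- main chain of inequalities
  have key1 : f τ - g τ ≤ ∫ x in s..τ, p x * (f x - g x) := by
    have : (∫ x in s..τ, f' x - g' x) ≤ ∫ x in s..τ, p x * (f x - g x) :=
      integral_mono_ae_restrict hsτ (hfsτ.sub hgsτ) hpu_int haeIcc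
    rw [integral_sub hfsτ hgsτ] at this
    linarith [hfτ, hgτ, hus, this]
  have key2 : (∫ x in s..τ, p x * (f x - g x)) ≤ ∫ x in s..τ, p x * (f τ - g τ) := by
    refine integral_mono_on hsτ hpu_int (hpsτ.mul_const (f τ - g τ)) ?_
    intro x hx
    have hxD : x ∈ D := hτD hx
    exact mul_le_mul_of_nonneg_left (hτmax ⟨hx.1, hx.2.trans hτmem.2⟩) (hp x hxD)
  have key3 : (∫ x in s..τ, p x * (f τ - g τ)) = (∫ x in s..τ, p x) * (f τ - g τ) :=
    integral_mul_const (f τ - g τ) p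
  have hPτ : (∫ x in s..τ, p x) ≤ ∫ x in s..t₁, p x := by
    have hps1 : IntervalIntegrable p volume s t₁ :=
      hsubint (hpint t₀ ht₀D) s hs01 t₁ ⟨hs0.trans hst₁.le, ht₁t₀⟩
    have hsub : (∫ x in s..t₁, p x) - ∫ x in s..τ, p x = ∫ x in τ..t₁, p x :=
      integral_interval_sub_left hps1 hpsτ
    have hnn : 0 ≤ ∫ x in τ..t₁, p x := by
      apply intervalIntegral.integral_nonneg hτmem.2
      intro x hx
      exact hp x (hsubD (hsub01 ⟨hsτ.trans hx.1, hx.2⟩))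
    linarith
  have hPτ' : (∫ x in s..τ, p x) * (f τ - g τ) ≤ (1/2) * (f τ - g τ) := by
    apply mul_le_mul_of_nonneg_right _ hMpos.le
    linarith
  linarith [key1, key2, key3.le, hPτ']
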